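/- Let a > 0 and t > 0, and let μ be a measure on [0,∞) such that ∫ e^{−s·x} μ(dx) = exp(−t·f_a(s)) for every s ≥ 0 (μ is the law of the subordinator with Laplace exponent f_a at time t). Then μ({0}) = exp(−t·e^a/(e^a − 1)); i.e., the subordinator with Laplace exponent f_a has an atom at 0 of mass exp(−t·e^a/(e^a − 1)), obtained as the limit of exp(−t·f_a(λ)) as λ → ∞. -/

import Mathlib

open MeasureTheory Filter Real

/-- The homographic family `f_a(x) = x e^a / (1 + x (e^a - 1))`. -/
noncomputable def f (a x : ℝ) : ℝ := x * Real.exp a / (1 + x * (Real.exp a - 1))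

/-- Let `a > 0`, `t > 0`, and let `μ` be a measure on `[0, ∞)` whose Laplace transform is
`s ↦ exp (-t f_a(s))` (the law of the subordinator with Laplace exponent `f_a` at time `t`).
Then `μ({0}) = exp (-t e^a/(e^a - 1))`: the subordinator has an atom at `0` of mass
`exp (-t e^a/(e^a - 1))`, the limit of `exp (-t f_a(λ))` as `λ → ∞`. -/
theorem atom_at_zero_f (a t : ℝ) (ha : 0 < a) (ht : 0 < t)
    (μ : MeasureTheory.Measure ℝ) (hsupp : μ (Set.Iio 0) = 0)
    (hμ : ∀ s : ℝ, 0 ≤ s → ∫ x, Real.exp (-s * x) ∂μ = Real.exp (-t * f a s)) :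
    μ {0} = ENNReal.ofReal (Real.exp (-t * (Real.exp a / (Real.exp a - 1)))) := by
  have hE : 0 < Real.exp a - 1 := by
    nlinarith [Real.add_one_le_exp a]
  -- μ is a finite measure
  have h0 := hμ 0 le_rfl
  simp [f] at h0
  have huniv : (μ Set.univ).toReal = 1 := by simpa [Measure.real] using h0
  have huniv_ne : μ Set.univ ≠ ⊤ := by
    intro h; rw [h] at huniv; simp at huniv
  haveI : IsFiniteMeasure μ := ⟨lt_top_iff_ne_top.2 huniv_ne⟩
  -- a.e. nonneg
  have hae : ∀ᵐ x ∂μ, 0 ≤ x := by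
    rw [MeasureTheory.ae_iff]
    convert hsupp using 2
    ext x
    simp [not_le]
  -- limit of the integrals by dominated convergence
  have h1 : Tendsto (fun n : ℕ => ∫ x, Real.exp (-(n : ℝ) * x) ∂μ) atTop
      (nhds (∫ x, ({0} : Set ℝ).indicator 1 x ∂μ)) := by
    apply MeasureTheory.tendsto_integral_of_dominated_convergence (fun _ => (1:ℝ))
    · intro n
      exact (Real.continuous_exp.comp (continuous_const.mul continuous_id)).aestronglyMeasurable
    · exact integrable_const 1
    · intro n
      filter_upwards [hae] with x hx
      rw [Real.norm_eq_abs, abs_of_pos (Real.exp_pos _)]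
      apply Real.exp_le_one_iff.mpr
      have : 0 ≤ (n : ℝ) * x := mul_nonneg (Nat.cast_nonneg _) hx
      linarith
    · filter_upwards [hae] with x hx
      rcases eq_or_lt_of_le hx with h | h
      · simp [← h]
      · have hxne : x ≠ 0 := ne_of_gt h
        rw [Set.indicator_of_notMem (by simpa using hxne)]
        have hmul : Tendsto (fun n : ℕ => (n : ℝ) * x) atTop atTop :=
          (tendsto_natCast_atTop_atTop).atTop_mul_const h
        have := Real.tendsto_exp_atBot.comp (tendsto_neg_atTop_atBot.comp hmul)
        simpa only [Function.comp_def, neg_mul] using this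
  rw [MeasureTheory.integral_indicator_one (measurableSet_singleton 0)] at h1
  -- limit of f a n
  have hfne : (0:ℝ) + (Real.exp a - 1) ≠ 0 := by linarith
  have hft : Tendsto (fun n : ℕ => f a n) atTop
      (nhds (Real.exp a / (Real.exp a - 1))) := by
    have base : Tendsto (fun n : ℕ => Real.exp a / (1 / (n:ℝ) + (Real.exp a - 1))) atTop
        (nhds (Real.exp a / (0 + (Real.exp a - 1)))) :=
      tendsto_const_nhds.div (tendsto_one_div_atTop_nhds_zero_nat.add tendsto_const_nhds) hfne
    rw [zero_add] at base
    apply base.congr'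
    filter_upwards [eventually_ge_atTop 1] with n hn
    have hn0 : (0:ℝ) < (n:ℝ) := by exact_mod_cast hn
    have hden : (0:ℝ) < 1 + (n:ℝ) * (Real.exp a - 1) := by nlinarith
    unfold f
    field_simp
  have h2 : Tendsto (fun n : ℕ => Real.exp (-t * f a n)) atTop
      (nhds (Real.exp (-t * (Real.exp a / (Real.exp a - 1))))) :=
    (Real.continuous_exp.tendsto _).comp (hft.const_mul (-t))
  -- identify the two limits
  have h1' : Tendsto (fun n : ℕ => Real.exp (-t * f a n)) atTop (nhds (μ {0}).toReal) := by
    apply h1.congr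
    intro n
    exact hμ n (Nat.cast_nonneg n)
  have hkey : (μ {0}).toReal = Real.exp (-t * (Real.exp a / (Real.exp a - 1))) :=
    tendsto_nhds_unique h1' h2
  have hne : μ {0} ≠ ⊤ := (measure_lt_top μ _).ne
  rw [← hkey, ENNReal.ofReal_toReal hne]
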